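/- Let I, J ⊆ S and let w ∈ ᴵWᴶ. Set K := {s ∈ J : w s w^{-1} ∈ I} and M := {t ∈ I : w^{-1} t w ∈ J}. Then conjugation by w restricts to a bijection from K onto M, one has w W_K w^{-1} = W_M, and w w_{K,0} w^{-1} = w_{M,0}; equivalently, w · w_{K,0} = w_{M,0} · w. -/

import Mathlib

variable {B W : Type*} [Group W] {M : CoxeterMatrix B}

/-- `ᴵW`: the elements of minimal length in their right coset `W_I w`. -/
def minRight (cs : CoxeterSystem M W) (I : Set W) : Set W :=
  {w | ∀ v ∈ Subgroup.closure I, cs.length w ≤ cs.length (v * w)}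

/-- `Wᴶ`: the elements of minimal length in their left coset `w W_J`. -/
def minLeft (cs : CoxeterSystem M W) (J : Set W) : Set W :=
  {w | ∀ v ∈ Subgroup.closure J, cs.length w ≤ cs.length (w * v)}

/-- `ᴵWᴶ`: the minimal-length representatives of the double cosets `W_I\W/W_J`. -/
def minDouble (cs : CoxeterSystem M W) (I J : Set W) : Set W :=
  minRight cs I ∩ minLeft cs J

/-- `w` is the longest element of the standard parabolic subgroup generated by `X`. -/
def IsLongestOf (cs : CoxeterSystem M W) (X : Set W) (w : W) : Prop :=
  w ∈ Subgroup.closure X ∧ ∀ v ∈ Subgroup.closure X, cs.length v ≤ cs.length w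

namespace CoxAux

open List CoxeterSystem
open scoped Classical

variable {B W : Type*} [Group W] {M : CoxeterMatrix B} (cs : CoxeterSystem M W)

local prefix:100 "s" => cs.simple
local prefix:100 "π" => cs.wordProd
local prefix:100 "ℓ" => cs.length

private noncomputable def sigmaFun (i : B) : W × ℤˣ → W × ℤˣ :=
  fun p => (s i * p.1 * s i, if p.1 = s i then -p.2 else p.2)

lemma simple_conj_eq_iff (i : B) (t : W) : s i * t * s i = s i ↔ t = s i := by
  constructor
  · intro h
    have := congrArg (fun x => s i * x * s i) h
    simpa [mul_assoc, cs.simple_mul_simple_cancel_left,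
      cs.simple_mul_simple_cancel_right] using this
  · rintro rfl
    rw [cs.simple_mul_simple_self, one_mul]

lemma sigmaFun_invol (i : B) : Function.Involutive (sigmaFun cs i) := by
  rintro ⟨t, ε⟩
  by_cases h : t = s i
  · subst h
    simp only [sigmaFun, if_pos rfl, cs.simple_mul_simple_self, one_mul,
      if_pos ((simple_conj_eq_iff cs i (s i)).mpr rfl), neg_neg]
    simp
  · simp only [sigmaFun, if_neg h, if_neg (fun hh => h ((simple_conj_eq_iff cs i t).mp hh))]
    rw [Prod.mk.injEq]
    refine ⟨?_, rfl⟩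
    rw [← mul_assoc, ← mul_assoc]
    simp [mul_assoc, cs.simple_mul_simple_cancel_left, cs.simple_mul_simple_cancel_right]

/-- The Tits sign permutation attached to a simple reflection. -/
noncomputable def sigma (i : B) : Equiv.Perm (W × ℤˣ) := (sigmaFun_invol cs i).toPerm

lemma sigma_apply (i : B) (t : W) (ε : ℤˣ) :
    sigma cs i (t, ε) = (s i * t * s i, if t = s i then -ε else ε) := rfl

/-- Composite of the sign permutations along a word. -/
noncomputable def phiw (ω : List B) : Equiv.Perm (W × ℤˣ) := (ω.map (sigma cs)).prod

lemma phiw_apply (ω : List B) (t : W) (ε : ℤˣ) :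
    phiw cs ω (t, ε) = (π ω * t * (π ω)⁻¹,
      if Odd ((cs.rightInvSeq ω).count t) then -ε else ε) := by
  induction ω with
  | nil => simp [phiw]
  | cons i ω ih =>
    have hris : cs.rightInvSeq (i :: ω) = ((π ω)⁻¹ * (s i) * (π ω)) :: cs.rightInvSeq ω := rfl
    have hmul : phiw cs (i :: ω) = sigma cs i * phiw cs ω := by
      simp [phiw]
    rw [hmul, Equiv.Perm.mul_apply, ih, sigma_apply]
    have hcond : (π ω * t * (π ω)⁻¹ = s i) ↔ ((π ω)⁻¹ * (s i) * (π ω) = t) := by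
      constructor
      · intro h; rw [← h]; group
      · intro h; rw [← h]; group
    rw [Prod.mk.injEq]
    constructor
    · rw [wordProd_cons, mul_inv_rev, cs.inv_simple]
      group
    · rw [hris, List.count_cons]
      simp only [beq_iff_eq]
      by_cases hc : (π ω)⁻¹ * (s i) * (π ω) = t
      · by_cases ho : Odd ((cs.rightInvSeq ω).count t)
        · rw [if_pos ho, if_pos (hcond.mpr hc)]
          rw [if_neg (by simpa [Nat.odd_add_one, if_pos hc] using ho), neg_neg]
        · rw [if_neg ho, if_pos (hcond.mpr hc),
            if_pos (by simpa [Nat.odd_add_one, if_pos hc] using ho)]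
      · rw [if_neg (fun h => hc (hcond.mp h)), if_neg hc, add_zero]


lemma pow_eq_phiw (i j : B) (k : ℕ) :
    (sigma cs i * sigma cs j) ^ k = phiw cs (alternatingWord i j (2 * k)) := by
  induction k with
  | zero => simp [phiw, alternatingWord]
  | succ k ih =>
    have h2 : alternatingWord i j (2 * (k + 1)) = i :: j :: alternatingWord i j (2 * k) := by
      have e1 : 2 * (k + 1) = (2 * k + 1) + 1 := by ring
      rw [e1, alternatingWord_succ', alternatingWord_succ']
      simp [Nat.even_add_one, parity_simps]
    rw [h2, pow_succ', ih]
    simp [phiw, mul_assoc]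

lemma alternatingWord_drop (i j : B) (n k : ℕ) :
    (alternatingWord i j n).drop k = alternatingWord i j (n - k) := by
  induction k generalizing n with
  | zero => simp
  | succ k ih =>
    cases n with
    | zero => simp [alternatingWord]
    | succ n =>
      rw [alternatingWord_succ', List.drop_succ_cons, ih, Nat.succ_sub_succ]

lemma alt_rev_append (q : ℕ) : ∀ i j : B,
    (alternatingWord i j q).reverse ++ alternatingWord i j (q + 1)
      = alternatingWord i j (2 * q + 1) := by
  induction q with
  | zero => intro i j; simp [alternatingWord]
  | succ q ih =>
    intro i j
    rw [alternatingWord_succ i j q, alternatingWord_succ i j (q + 1)]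
    simp only [List.concat_eq_append, List.reverse_append, List.reverse_singleton,
      List.singleton_append, List.cons_append, List.nil_append, ← List.append_assoc]
    rw [ih j i]
    have h1 : 2 * (q + 1) + 1 = (2 * q + 2) + 1 := by ring
    rw [h1, alternatingWord_succ i j (2 * q + 2), alternatingWord_succ' j i (2 * q + 1)]
    simp [parity_simps]

lemma pi_alt_add_two_mul (i j : B) (n : ℕ) :
    π (alternatingWord i j (n + 2 * M i j)) = π (alternatingWord i j n) := by
  rw [prod_alternatingWord_eq_mul_pow, prod_alternatingWord_eq_mul_pow]
  have h2 : (n + 2 * M i j) / 2 = n / 2 + M i j := by omega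
  rw [h2, pow_add, cs.simple_mul_simple_pow i j, mul_one]
  have h3 : Even (n + 2 * M i j) ↔ Even n := by
    simp [Nat.even_add]
  by_cases h : Even n
  · rw [if_pos h, if_pos (h3.mpr h)]
  · rw [if_neg h, if_neg (fun hh => h (h3.mp hh))]

lemma ris_alt_getD (i j : B) (m l : ℕ) (hl : l < 2 * m) :
    (cs.rightInvSeq (alternatingWord i j (2 * m))).getD l 1
      = π (alternatingWord i j (2 * (2 * m - l) - 1)) := by
  rw [getD_rightInvSeq, alternatingWord_drop]
  have hget : (alternatingWord i j (2 * m))[l]?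
      = ((alternatingWord i j (2 * m)).drop l)[0]? := by
    rw [List.getElem?_drop, Nat.add_zero]
  set q := 2 * m - l - 1 with hqdef
  have hq : 2 * m - l = q + 1 := by omega
  have e1 : 2 * m - (l + 1) = q := by omega
  have e2 : 2 * (2 * m - l) - 1 = 2 * q + 1 := by omega
  rw [hget, alternatingWord_drop, e1, e2, hq, alternatingWord_succ']
  simp only [List.getElem?_cons_zero, Option.map_some, Option.getD_some]
  rw [← alt_rev_append q i j, wordProd_append, wordProd_reverse, alternatingWord_succ',
    wordProd_cons]
  by_cases h : Even q
  · rw [if_pos h]; group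
  · rw [if_neg h]; group


lemma count_ris_alt_even (i j : B) (t : W) :
    ¬ Odd ((cs.rightInvSeq (alternatingWord i j (2 * M i j))).count t) := by
  set m := M i j with hm
  set R := cs.rightInvSeq (alternatingWord i j (2 * m)) with hR
  have hlen : R.length = 2 * m := by
    rw [hR, length_rightInvSeq, length_alternatingWord]
  have key : R.drop m = R.take m := by
    apply List.ext_getElem
    · simp only [List.length_drop, List.length_take, hlen]; omega
    · intro l h1 h2
      rw [List.getElem_drop, List.getElem_take]
      rw [List.length_drop, hlen] at h1
      have hl : l < m := by omega
      rw [← List.getD_eq_getElem R 1 (by omega), ← List.getD_eq_getElem R 1 (by omega)]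
      rw [hR, ris_alt_getD cs i j m (m + l) (by omega), ris_alt_getD cs i j m l (by omega)]
      have e1 : 2 * (2 * m - (m + l)) - 1 = 2 * (m - l) - 1 := by omega
      have e2 : 2 * (2 * m - l) - 1 = (2 * (m - l) - 1) + 2 * m := by omega
      rw [e1, e2, hm, pi_alt_add_two_mul]
  have hsplit : R = R.take m ++ R.take m := by
    conv_lhs => rw [← List.take_append_drop m R]
    rw [key]
  rw [hsplit, List.count_append, Nat.odd_add, ← Nat.not_even_iff_odd]
  tauto

lemma isLiftable : M.IsLiftable (fun i => sigma cs i) := by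
  intro i j
  rw [pow_eq_phiw]
  apply Equiv.ext
  rintro ⟨t, ε⟩
  rw [phiw_apply]
  have h1 : π (alternatingWord i j (2 * M i j)) = 1 := by
    rw [prod_alternatingWord_eq_mul_pow, if_pos (by simp [parity_simps])]
    have : 2 * M i j / 2 = M i j := by omega
    rw [this, one_mul, cs.simple_mul_simple_pow i j]
  rw [if_neg (count_ris_alt_even cs i j t), h1]
  simp

/-- The Tits sign representation. -/
noncomputable def eta : W →* Equiv.Perm (W × ℤˣ) :=
  cs.lift ⟨fun i => sigma cs i, isLiftable cs⟩

lemma eta_simple (i : B) : eta cs (s i) = sigma cs i :=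
  cs.lift_apply_simple (isLiftable cs) i

lemma eta_wordProd (ω : List B) : eta cs (π ω) = phiw cs ω := by
  induction ω with
  | nil => simp [phiw]
  | cons i ω ih =>
    rw [wordProd_cons, map_mul, eta_simple, ih]
    simp [phiw]

lemma eta_apply_word (ω : List B) (t : W) (ε : ℤˣ) :
    eta cs (π ω) (t, ε) = (π ω * t * (π ω)⁻¹,
      if Odd ((cs.rightInvSeq ω).count t) then -ε else ε) := by
  rw [eta_wordProd, phiw_apply]

/-- `eta` linearity in the sign coordinate and conjugation in the first coordinate. -/
lemma eta_apply (w t : W) (ε : ℤˣ) :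
    eta cs w (t, ε) = (w * t * w⁻¹, ε * (eta cs w (t, 1)).2) := by
  obtain ⟨ω, rfl⟩ := cs.wordProd_surjective w
  rw [eta_apply_word, eta_apply_word]
  by_cases h : Odd ((cs.rightInvSeq ω).count t)
  · rw [if_pos h, if_pos h]
    simp
  · rw [if_neg h, if_neg h]
    simp

/-- `t` is an inversion of `w` in the sense of the sign representation. -/
def nflip (w t : W) : Prop := (eta cs w (t, 1)).2 = -1

lemma nflip_iff_odd_count (ω : List B) (t : W) :
    nflip cs (π ω) t ↔ Odd ((cs.rightInvSeq ω).count t) := by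
  rw [nflip, eta_apply_word]
  by_cases h : Odd ((cs.rightInvSeq ω).count t)
  · simp [if_pos h, h]
  · simp only [if_neg h]
    constructor
    · intro hh; exact absurd hh (by decide)
    · intro hh; exact absurd hh h

lemma not_nflip_one (t : W) : ¬ nflip cs 1 t := by
  rw [nflip]
  simp only [map_one, Equiv.Perm.coe_one, id_eq]
  decide


lemma nflip_isReflection {w t : W} (h : nflip cs w t) : cs.IsReflection t := by
  obtain ⟨ω, rfl⟩ := cs.wordProd_surjective w
  rw [nflip_iff_odd_count] at h
  have hmem : t ∈ cs.rightInvSeq ω := by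
    rw [← List.count_pos_iff]
    rcases h with ⟨k, hk⟩
    omega
  exact cs.isReflection_of_mem_rightInvSeq ω hmem

lemma nflip_length_lt {w t : W} (h : nflip cs w t) : ℓ (w * t) < ℓ w := by
  obtain ⟨ω, homega, rfl⟩ := cs.exists_reduced_word' w
  rw [nflip_iff_odd_count] at h
  have hmem : t ∈ cs.rightInvSeq ω := by
    rw [← List.count_pos_iff]
    rcases h with ⟨k, hk⟩
    omega
  obtain ⟨⟨n, hn⟩, hget⟩ := List.mem_iff_get.mp hmem
  have hn' : n < ω.length := by
    have := hn
    rwa [length_rightInvSeq] at this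
  have ht : (cs.rightInvSeq ω).getD n 1 = t := by
    rw [List.getD_eq_getElem _ _ hn]
    simpa using hget
  have hprod : π ω * t = π (ω.eraseIdx n) := by
    rw [← ht]
    exact cs.wordProd_mul_getD_rightInvSeq ω n
  have hlen : (ω.eraseIdx n).length = ω.length - 1 := by
    rw [List.length_eraseIdx]
    simp [hn']
  have h1 : ℓ (π ω * t) ≤ ω.length - 1 := by
    rw [hprod]
    calc ℓ (π (ω.eraseIdx n)) ≤ (ω.eraseIdx n).length := cs.length_wordProd_le _
    _ = ω.length - 1 := hlen
  have h2 : ℓ (π ω) = ω.length := homega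
  omega

lemma eta_refl_self {t : W} (ht : cs.IsReflection t) (ε : ℤˣ) :
    eta cs t (t, ε) = (t, -ε) := by
  obtain ⟨u, i, rfl⟩ := ht
  set c := (eta cs u⁻¹ (u * s i * u⁻¹, 1)).2 with hc
  set d := (eta cs u (s i, 1)).2 with hd
  have h4 : ∀ ε : ℤˣ, eta cs u⁻¹ (u * s i * u⁻¹, ε) = (s i, ε * c) := by
    intro ε
    rw [eta_apply, ← hc]
    congr 1
    group
  have h5 : ∀ ε : ℤˣ, eta cs u (s i, ε) = (u * s i * u⁻¹, ε * d) := by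
    intro ε
    rw [eta_apply, ← hd]
  have hcd : c * d = 1 := by
    have h3 : eta cs u (eta cs u⁻¹ (u * s i * u⁻¹, (1:ℤˣ))) = (u * s i * u⁻¹, (1:ℤˣ)) := by
      rw [← Equiv.Perm.mul_apply, ← map_mul, mul_inv_cancel, map_one]
      rfl
    rw [h4 1, one_mul, h5 c] at h3
    exact (Prod.ext_iff.mp h3).2
  have hsplit : eta cs (u * s i * u⁻¹) (u * s i * u⁻¹, ε)
      = eta cs u (eta cs (s i) (eta cs u⁻¹ (u * s i * u⁻¹, ε))) := by
    rw [← Equiv.Perm.mul_apply, ← Equiv.Perm.mul_apply, ← map_mul, ← map_mul]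
  rw [hsplit, h4 ε, eta_simple, sigma_apply, if_pos rfl, cs.simple_mul_simple_self, one_mul,
    h5 (-(ε * c))]
  congr 1
  rw [neg_mul, mul_assoc, hcd, mul_one]

lemma nflip_mul_refl {t : W} (ht : cs.IsReflection t) (w : W) :
    nflip cs (w * t) t ↔ ¬ nflip cs w t := by
  have h1 : eta cs (w * t) (t, (1:ℤˣ)) = (w * t * w⁻¹, -(eta cs w (t, 1)).2) := by
    rw [map_mul, Equiv.Perm.mul_apply, eta_refl_self cs ht, eta_apply]
    congr 1
    simp
  rw [nflip, nflip, h1]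
  rcases Int.units_eq_one_or (eta cs w (t, 1)).2 with h | h <;> rw [h] <;> simp <;> decide

lemma nflip_of_lt {w t : W} (ht : cs.IsReflection t) (hlt : ℓ (w * t) < ℓ w) :
    nflip cs w t := by
  by_contra h
  have h2 : nflip cs (w * t) t := (nflip_mul_refl cs ht w).mpr h
  have h3 := nflip_length_lt cs h2
  rw [mul_assoc, ht.mul_self, mul_one] at h3
  omega

lemma exchange {ω : List B} {t : W} (ht : cs.IsReflection t)
    (hlt : ℓ (π ω * t) < ℓ (π ω)) :
    ∃ n < ω.length, π ω * t = π (ω.eraseIdx n) := by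
  have h1 : nflip cs (π ω) t := nflip_of_lt cs ht hlt
  rw [nflip_iff_odd_count] at h1
  have hmem : t ∈ cs.rightInvSeq ω := by
    rw [← List.count_pos_iff]
    rcases h1 with ⟨k, hk⟩
    omega
  obtain ⟨⟨n, hn⟩, hget⟩ := List.mem_iff_get.mp hmem
  have hn' : n < ω.length := by
    have := hn
    rwa [length_rightInvSeq] at this
  refine ⟨n, hn', ?_⟩
  have ht' : (cs.rightInvSeq ω).getD n 1 = t := by
    rw [List.getD_eq_getElem _ _ hn]
    simpa using hget
  rw [← ht']
  exact cs.wordProd_mul_getD_rightInvSeq ω n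

lemma nflip_mul_simple (w t : W) (i : B) :
    nflip cs (w * s i) t
      ↔ (if t = s i then ¬ nflip cs w (s i * t * s i) else nflip cs w (s i * t * s i)) := by
  have h1 : eta cs (w * s i) (t, (1:ℤˣ)) =
      eta cs w (sigma cs i (t, 1)) := by
    rw [map_mul, Equiv.Perm.mul_apply, eta_simple]
  rw [nflip, h1, sigma_apply]
  by_cases h : t = s i
  · rw [if_pos h, if_pos h, eta_apply, nflip]
    rcases Int.units_eq_one_or (eta cs w (s i * t * s i, 1)).2 with hh | hh <;>
      rw [hh] <;> simp
  · rw [if_neg h, if_neg h, eta_apply, nflip, one_mul]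

lemma eq_of_nflip_eq : ∀ n : ℕ, ∀ u u' : W, ℓ u = n →
    (∀ t, nflip cs u t ↔ nflip cs u' t) → u = u' := by
  intro n
  induction n using Nat.strong_induction_on with
  | _ n ih =>
    intro u u' hn h
    by_cases hu : u = 1
    · subst hu
      by_contra hne
      obtain ⟨i, hi⟩ := cs.exists_rightDescent_of_ne_one (fun hh => hne hh.symm)
      have h1 : nflip cs u' (s i) := nflip_of_lt cs (cs.isReflection_simple i) hi
      exact not_nflip_one cs (s i) ((h (s i)).mpr h1)
    · obtain ⟨i, hi⟩ := cs.exists_rightDescent_of_ne_one hu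
      have h1 : nflip cs u (s i) := nflip_of_lt cs (cs.isReflection_simple i) hi
      have h2 : nflip cs u' (s i) := (h (s i)).mp h1
      have h2' : ℓ (u' * s i) < ℓ u' := nflip_length_lt cs h2
      have hfor : ∀ t, nflip cs (u * s i) t ↔ nflip cs (u' * s i) t := by
        intro t
        rw [nflip_mul_simple, nflip_mul_simple]
        by_cases hc : t = s i
        · rw [if_pos hc, if_pos hc, h]
        · rw [if_neg hc, if_neg hc, h]
      have hlen : ℓ (u * s i) < n := by
        rw [← hn]
        exact hi
      have := ih (ℓ (u * s i)) hlen (u * s i) (u' * s i) rfl hfor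
      exact mul_right_cancel this


/-- A word all of whose letters are simple reflections belonging to `X`. -/
def WordOn (X : Set W) (ω : List B) : Prop := ∀ i ∈ ω, cs.simple i ∈ X

lemma wordOn_prod_mem {X : Set W} {ω : List B} (h : WordOn cs X ω) :
    π ω ∈ Subgroup.closure X := by
  induction ω with
  | nil =>
    rw [wordProd_nil]
    exact one_mem _
  | cons i ω ih =>
    rw [wordProd_cons]
    exact mul_mem (Subgroup.subset_closure (h i List.mem_cons_self))
      (ih (fun k hk => h k (List.mem_cons_of_mem i hk)))

lemma mem_closure_iff_word {X : Set W} (hX : X ⊆ Set.range cs.simple) (u : W) :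
    u ∈ Subgroup.closure X ↔ ∃ ω, WordOn cs X ω ∧ π ω = u := by
  constructor
  · intro hu
    induction hu using Subgroup.closure_induction with
    | mem x hx =>
      obtain ⟨i, hi⟩ := hX hx
      exact ⟨[i], fun k hk => by simpa [List.eq_of_mem_singleton hk, hi] using hx, by simp [hi]⟩
    | one => exact ⟨[], by simp [WordOn], by simp⟩
    | mul x y _ _ hx hy =>
      obtain ⟨ω₁, h1, rfl⟩ := hx
      obtain ⟨ω₂, h2, rfl⟩ := hy
      exact ⟨ω₁ ++ ω₂, fun k hk => by
        rcases List.mem_append.mp hk with hk | hk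
        exacts [h1 k hk, h2 k hk], by rw [wordProd_append]⟩
    | inv x _ hx =>
      obtain ⟨ω, h1, rfl⟩ := hx
      exact ⟨ω.reverse, fun k hk => h1 k (List.mem_reverse.mp hk), by rw [wordProd_reverse]⟩
  · rintro ⟨ω, h, rfl⟩
    exact wordOn_prod_mem cs h

lemma one_mem_minLeft (X : Set W) : (1 : W) ∈ minLeft cs X := by
  intro v hv
  simp

/-- Key additivity lemma: if `w` is of minimal length in `w W_X`, lengths add. -/
lemma key_add {X : Set W} (hX : X ⊆ Set.range cs.simple) {w : W}
    (hw : w ∈ minLeft cs X) :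
    ∀ n : ℕ, ∀ ω : List B, WordOn cs X ω → ω.length = n →
      (∀ τ : List B, WordOn cs X τ → π τ = π ω → n ≤ τ.length) →
      ℓ (w * π ω) = ℓ w + n := by
  intro n
  induction n using Nat.strong_induction_on with
  | _ n ihn =>
    intro ω hon hlen hmin
    rcases Nat.eq_zero_or_pos n with h0 | hpos
    · subst h0
      rw [List.length_eq_zero_iff.mp hlen]
      simp
    · have hne : ω ≠ [] := by
        intro h
        rw [h] at hlen
        simp at hlen
        omega
      set ω' := ω.dropLast with hω'
      set iL := ω.getLast hne with hiL
      have hsplit : ω = ω' ++ [iL] := (List.dropLast_append_getLast hne).symm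
      set u' := π ω' with hu'
      have hon' : WordOn cs X ω' := fun k hk => hon k (by
        rw [hsplit]; exact List.mem_append_left _ hk)
      have hlen' : ω'.length = n - 1 := by
        rw [hω', List.length_dropLast, hlen]
      have hmin' : ∀ τ : List B, WordOn cs X τ → π τ = π ω' → n - 1 ≤ τ.length := by
        intro τ hτ hπ
        by_contra hlt
        push_neg at hlt
        have hτ' : WordOn cs X (τ ++ [iL]) := by
          intro k hk
          rcases List.mem_append.mp hk with hk | hk
          · exact hτ k hk
          · rw [List.eq_of_mem_singleton hk]
            exact hon iL (by rw [hsplit]; exact List.mem_append_right _ (by simp))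
        have hπ' : π (τ ++ [iL]) = π ω := by
          rw [wordProd_append, hπ, hsplit, wordProd_append]
        have := hmin (τ ++ [iL]) hτ' hπ'
        simp at this
        omega
      have IH : ℓ (w * u') = ℓ w + (n - 1) :=
        ihn (n - 1) (by omega) ω' hon' hlen' hmin'
      have hu : π ω = u' * s iL := by
        rw [hsplit, wordProd_append, wordProd_singleton, hu']
      rcases cs.length_mul_simple (w * u') iL with hup | hdown
      · rw [hu, ← mul_assoc, hup, IH]
        omega
      · exfalso
        have hne2 := cs.length_mul_simple_ne (w * u') iL
        have hlt : ℓ (w * u' * s iL) < ℓ (w * u') := by omega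
        obtain ⟨ρ, hρlen, hρ⟩ := cs.exists_reduced_word w
        replace hρlen : ρ.length = ℓ w := by rw [hρ]; exact hρlen.symm
        set θ := ρ ++ ω' with hθ
        have hθπ : π θ = w * u' := by
          rw [hθ, wordProd_append, ← hρ]
        have hθlen : θ.length = ℓ w + (n - 1) := by
          simp [hθ, hρlen, hlen']
        have hlt2 : ℓ (π θ * s iL) < ℓ (π θ) := by
          rw [hθπ]
          exact hlt
        obtain ⟨nn, hnn, heq⟩ := exchange cs (cs.isReflection_simple iL) hlt2
        rw [hθπ] at heq
        by_cases hc : nn < ρ.length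
        · have herase : θ.eraseIdx nn = ρ.eraseIdx nn ++ ω' := by
            rw [hθ, List.eraseIdx_append_of_lt_length hc]
          rw [herase, wordProd_append] at heq
          have hval : π (ρ.eraseIdx nn) = w * (u' * s iL * u'⁻¹) := by
            have : π (ρ.eraseIdx nn) * u' = w * u' * s iL := heq.symm
            have h2 : π (ρ.eraseIdx nn) = w * u' * s iL * u'⁻¹ := by
              rw [← this]
              group
            rw [h2]
            group
          have hv : u' * s iL * u'⁻¹ ∈ Subgroup.closure X := by
            have h1 : u' ∈ Subgroup.closure X := wordOn_prod_mem cs hon'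
            have h2 : s iL ∈ Subgroup.closure X := Subgroup.subset_closure
              (hon iL (by rw [hsplit]; exact List.mem_append_right _ (by simp)))
            exact mul_mem (mul_mem h1 h2) (inv_mem h1)
          have hge : ℓ w ≤ ℓ (π (ρ.eraseIdx nn)) := by
            rw [hval]
            exact hw _ hv
          have hle : ℓ (π (ρ.eraseIdx nn)) ≤ ρ.length - 1 := by
            calc ℓ (π (ρ.eraseIdx nn)) ≤ (ρ.eraseIdx nn).length := cs.length_wordProd_le _
            _ = ρ.length - 1 := by rw [List.length_eraseIdx]; simp [hc]
          omega
        · push_neg at hc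
          have hk : nn - ρ.length < ω'.length := by
            have : θ.length = ρ.length + ω'.length := by simp [hθ]
            omega
          have herase : θ.eraseIdx nn = ρ ++ ω'.eraseIdx (nn - ρ.length) := by
            rw [hθ, List.eraseIdx_append_of_length_le hc]
          rw [herase, wordProd_append, ← hρ] at heq
          have heq2 : π (ω'.eraseIdx (nn - ρ.length)) = π ω := by
            have h2 : w * (u' * s iL) = w * π (ω'.eraseIdx (nn - ρ.length)) := by
              rw [← mul_assoc]
              exact heq
            rw [hu]
            exact (mul_left_cancel h2).symm
          have hτon : WordOn cs X (ω'.eraseIdx (nn - ρ.length)) := by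
            intro k' hk'
            exact hon' k' ((List.eraseIdx_sublist ω' (nn - ρ.length)).subset hk')
          have := hmin _ hτon heq2
          have hlen2 : (ω'.eraseIdx (nn - ρ.length)).length = ω'.length - 1 := by
            rw [List.length_eraseIdx]
            simp [hk]
          omega


lemma min_word_aux {X : Set W} (hX : X ⊆ Set.range cs.simple) {u : W}
    (hu : u ∈ Subgroup.closure X) :
    ∃ ω, WordOn cs X ω ∧ π ω = u ∧
      (∀ τ, WordOn cs X τ → π τ = u → ω.length ≤ τ.length) := by
  classical
  obtain ⟨ω0, h0, hπ0⟩ := (mem_closure_iff_word cs hX u).mp hu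
  have hP : ∃ k, ∃ ω : List B, WordOn cs X ω ∧ π ω = u ∧ ω.length = k :=
    ⟨ω0.length, ω0, h0, hπ0, rfl⟩
  obtain ⟨ω, hon, hπ, hlen⟩ := Nat.find_spec hP
  refine ⟨ω, hon, hπ, ?_⟩
  intro τ h1 h2
  rw [hlen]
  exact Nat.find_min' hP ⟨τ, h1, h2, rfl⟩

lemma minLeft_length_add {X : Set W} (hX : X ⊆ Set.range cs.simple) {w u : W}
    (hw : w ∈ minLeft cs X) (hu : u ∈ Subgroup.closure X) :
    ℓ (w * u) = ℓ w + ℓ u := by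
  obtain ⟨ω, hon, hπ, hminlen⟩ := min_word_aux cs hX hu
  have hmin' : ∀ τ, WordOn cs X τ → π τ = π ω → ω.length ≤ τ.length := by
    intro τ h1 h2
    exact hminlen τ h1 (by rw [h2, hπ])
  have h1 := key_add cs hX hw ω.length ω hon rfl hmin'
  have h2 := key_add cs hX (one_mem_minLeft cs X) ω.length ω hon rfl hmin'
  rw [one_mul, cs.length_one, zero_add, hπ] at h2
  rw [hπ] at h1
  rw [h1, h2]

lemma exists_reduced_wordOn {X : Set W} (hX : X ⊆ Set.range cs.simple) {u : W}
    (hu : u ∈ Subgroup.closure X) :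
    ∃ ω, WordOn cs X ω ∧ π ω = u ∧ ω.length = ℓ u := by
  obtain ⟨ω, hon, hπ, hminlen⟩ := min_word_aux cs hX hu
  have hmin' : ∀ τ, WordOn cs X τ → π τ = π ω → ω.length ≤ τ.length := by
    intro τ h1 h2
    exact hminlen τ h1 (by rw [h2, hπ])
  have h2 := key_add cs hX (one_mem_minLeft cs X) ω.length ω hon rfl hmin'
  rw [one_mul, cs.length_one, zero_add, hπ] at h2
  exact ⟨ω, hon, hπ, h2.symm⟩

lemma minRight_length_add {X : Set W} (hX : X ⊆ Set.range cs.simple) {w v : W}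
    (hw : w ∈ minRight cs X) (hv : v ∈ Subgroup.closure X) :
    ℓ (v * w) = ℓ v + ℓ w := by
  have hw' : w⁻¹ ∈ minLeft cs X := by
    intro x hx
    have h1 : ℓ w ≤ ℓ (x⁻¹ * w) := hw x⁻¹ (inv_mem hx)
    have h2 : ℓ (w⁻¹ * x) = ℓ (x⁻¹ * w) := by
      rw [← cs.length_inv (w⁻¹ * x)]
      congr 1
      group
    rw [cs.length_inv w]
    omega
  have h3 := minLeft_length_add cs hX hw' (inv_mem hv)
  have h4 : ℓ (w⁻¹ * v⁻¹) = ℓ (v * w) := by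
    rw [← cs.length_inv (w⁻¹ * v⁻¹)]
    congr 1
    group
  rw [h4, cs.length_inv, cs.length_inv] at h3
  omega

lemma ris_wordOn_subset {X : Set W} : ∀ {ω : List B}, WordOn cs X ω →
    ∀ t ∈ cs.rightInvSeq ω, t ∈ Subgroup.closure X := by
  intro ω
  induction ω with
  | nil => simp
  | cons i ω ih =>
    intro hon t ht
    have hris : cs.rightInvSeq (i :: ω) = ((π ω)⁻¹ * (s i) * (π ω)) :: cs.rightInvSeq ω := rfl
    rw [hris, List.mem_cons] at ht
    have hontl : WordOn cs X ω := fun k hk => hon k (List.mem_cons_of_mem i hk)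
    rcases ht with rfl | ht
    · have h1 : π ω ∈ Subgroup.closure X := wordOn_prod_mem cs hontl
      exact mul_mem (mul_mem (inv_mem h1)
        (Subgroup.subset_closure (hon i List.mem_cons_self))) h1
    · exact ih hontl t ht

lemma isLongestOf_unique {X : Set W} (hX : X ⊆ Set.range cs.simple) {u u' : W}
    (hu : IsLongestOf cs X u) (hu' : IsLongestOf cs X u') : u = u' := by
  have main : ∀ v : W, IsLongestOf cs X v →
      ∀ t, nflip cs v t ↔ (cs.IsReflection t ∧ t ∈ Subgroup.closure X) := by
    intro v hv t
    constructor
    · intro hf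
      refine ⟨nflip_isReflection cs hf, ?_⟩
      obtain ⟨ω, hon, hπ, hlen⟩ := exists_reduced_wordOn cs hX hv.1
      rw [← hπ, nflip_iff_odd_count] at hf
      have hmem : t ∈ cs.rightInvSeq ω := by
        rw [← List.count_pos_iff]
        rcases hf with ⟨k, hk⟩
        omega
      exact ris_wordOn_subset cs hon t hmem
    · rintro ⟨hrefl, hmem⟩
      apply nflip_of_lt cs hrefl
      have h1 : ℓ (v * t) ≤ ℓ v := hv.2 _ (mul_mem hv.1 hmem)
      have h2 : ℓ (v * t) ≠ ℓ v := hrefl.length_mul_left_ne v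
      omega
  apply eq_of_nflip_eq cs (ℓ u) u u' rfl
  intro t
  rw [main u hu t, main u' hu' t]

end CoxAux

open CoxAux in
/-- Let `(W, S)` be a finite Coxeter system, `I, J ⊆ S`, `w ∈ ᴵWᴶ`,
`K := {s ∈ J : w s w⁻¹ ∈ I}` and `Mset := {t ∈ I : w⁻¹ t w ∈ J}`.  Then conjugation by `w`
restricts to a bijection from `K` onto `Mset`, one has `w W_K w⁻¹ = W_{Mset}`, and
`w w_{K,0} w⁻¹ = w_{Mset,0}`; equivalently, `w ⬝ w_{K,0} = w_{Mset,0} ⬝ w`. -/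
theorem stmt_13 [Finite W] (cs : CoxeterSystem M W)
    (I J : Set W) (hI : I ⊆ Set.range cs.simple) (hJ : J ⊆ Set.range cs.simple)
    (w : W) (hw : w ∈ minDouble cs I J)
    (K Mset : Set W)
    (hK : K = {s ∈ J | w * s * w⁻¹ ∈ I}) (hM : Mset = {t ∈ I | w⁻¹ * t * w ∈ J})
    (wK0 : W) (hwK0 : IsLongestOf cs K wK0)
    (wM0 : W) (hwM0 : IsLongestOf cs Mset wM0) :
    Set.BijOn (fun s => w * s * w⁻¹) K Mset ∧
      Subgroup.map (MulAut.conj w).toMonoidHom (Subgroup.closure K) = Subgroup.closure Mset ∧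
      w * wK0 * w⁻¹ = wM0 ∧ w * wK0 = wM0 * w := by
  obtain ⟨hwR, hwL⟩ := hw
  have hKJ : K ⊆ J := by rw [hK]; exact Set.sep_subset _ _
  have hMI : Mset ⊆ I := by rw [hM]; exact Set.sep_subset _ _
  have hbij : Set.BijOn (fun s => w * s * w⁻¹) K Mset := by
    refine ⟨?_, ?_, ?_⟩
    · intro x hx
      rw [hK] at hx
      rw [hM]
      refine ⟨hx.2, ?_⟩
      have h1 : w⁻¹ * (w * x * w⁻¹) * w = x := by group
      show w⁻¹ * (w * x * w⁻¹) * w ∈ J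
      rw [h1]
      exact hx.1
    · intro x _ y _ hxy
      simp only at hxy
      have := mul_right_cancel hxy
      exact mul_left_cancel this
    · intro t ht
      rw [hM] at ht
      refine ⟨w⁻¹ * t * w, ?_, ?_⟩
      · rw [hK]
        refine ⟨ht.2, ?_⟩
        have h1 : w * (w⁻¹ * t * w) * w⁻¹ = t := by group
        show w * (w⁻¹ * t * w) * w⁻¹ ∈ I
        rw [h1]
        exact ht.1
      · show w * (w⁻¹ * t * w) * w⁻¹ = t
        group
  have himg : (fun s => w * s * w⁻¹) '' K = Mset := hbij.image_eq
  have hmap : Subgroup.map (MulAut.conj w).toMonoidHom (Subgroup.closure K)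
      = Subgroup.closure Mset := by
    rw [MonoidHom.map_closure, ← himg]
    congr 1
  have hKcl : ∀ k ∈ Subgroup.closure K, w * k * w⁻¹ ∈ Subgroup.closure Mset := by
    intro k hk
    rw [← hmap]
    exact ⟨k, hk, by simp [MulAut.conj_apply]⟩
  have hMcl : ∀ v ∈ Subgroup.closure Mset, w⁻¹ * v * w ∈ Subgroup.closure K := by
    intro v hv
    rw [← hmap] at hv
    obtain ⟨k, hk, hkv⟩ := hv
    have h1 : w⁻¹ * v * w = k := by
      rw [← hkv]
      simp only [MulEquiv.coe_toMonoidHom, MulAut.conj_apply]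
      group
    rw [h1]
    exact hk
  have hlenpres : ∀ k ∈ Subgroup.closure K, cs.length (w * k * w⁻¹) = cs.length k := by
    intro k hk
    have hkJ : k ∈ Subgroup.closure J := Subgroup.closure_mono hKJ hk
    have h1 : cs.length (w * k) = cs.length w + cs.length k :=
      minLeft_length_add cs hJ hwL hkJ
    have hmI : w * k * w⁻¹ ∈ Subgroup.closure I :=
      Subgroup.closure_mono hMI (hKcl k hk)
    have h2 : cs.length ((w * k * w⁻¹) * w) = cs.length (w * k * w⁻¹) + cs.length w :=
      minRight_length_add cs hI hwR hmI
    have h3 : (w * k * w⁻¹) * w = w * k := by group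
    rw [h3, h1] at h2
    omega
  have hlong : IsLongestOf cs Mset (w * wK0 * w⁻¹) := by
    refine ⟨hKcl _ hwK0.1, ?_⟩
    intro v hv
    have h1 : cs.length (w⁻¹ * v * w) ≤ cs.length wK0 := hwK0.2 _ (hMcl v hv)
    have h2 : cs.length (w * (w⁻¹ * v * w) * w⁻¹) = cs.length (w⁻¹ * v * w) :=
      hlenpres _ (hMcl v hv)
    have h3 : w * (w⁻¹ * v * w) * w⁻¹ = v := by group
    rw [h3] at h2
    have h4 : cs.length (w * wK0 * w⁻¹) = cs.length wK0 := hlenpres _ hwK0.1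
    omega
  have hfin : w * wK0 * w⁻¹ = wM0 :=
    isLongestOf_unique cs (hMI.trans hI) hlong hwM0
  refine ⟨hbij, hmap, hfin, ?_⟩
  rw [← hfin]
  group
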